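/- Fix m ≥ 2 and i ≥ 0, and let S_i = ⟨{m} ∪ I_i⟩ where I_i = {x ∈ [m+i+1, 2m+i] : m ∤ x}. Then the embedding dimension of S_i equals m; that is, every element of {m} ∪ I_i is a minimal generator of S_i. -/

import Mathlib

/-- A numerical semigroup: a cofinite additive submonoid of ℕ containing 0. -/
def IsNumericalSemigroup (S : Set ℕ) : Prop :=
  0 ∈ S ∧ (∀ a ∈ S, ∀ b ∈ S, a + b ∈ S) ∧ Sᶜ.Finite

/-- The nsConductor: least `c` such that every `n ≥ c` belongs to `S`. -/
noncomputable def nsConductor (S : Set ℕ) : ℕ :=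
  sInf {c : ℕ | ∀ n : ℕ, c ≤ n → n ∈ S}

/-- The genus: number of gaps. -/
noncomputable def genus (S : Set ℕ) : ℕ := Sᶜ.ncard

/-- The Frobenius number: largest integer not in `S` (for `S ≠ ℕ`). -/
noncomputable def nsFrobenius (S : Set ℕ) : ℕ := sSup Sᶜ

/-- The multiplicity: least positive element of `S`. -/
noncomputable def mult (S : Set ℕ) : ℕ := sInf {n : ℕ | n ∈ S ∧ n ≠ 0}

/-- `p` is a minimal generator (primitive) of `S`: nonzero element of `S` that is
not a sum of two nonzero elements of `S`. -/
def IsPrimitive (S : Set ℕ) (p : ℕ) : Prop :=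
  p ∈ S ∧ p ≠ 0 ∧ ∀ a ∈ S, ∀ b ∈ S, a ≠ 0 → b ≠ 0 → a + b ≠ p

/-- The set of minimal generators of `S`. -/
def primitives (S : Set ℕ) : Set ℕ := {p | IsPrimitive S p}

/-- The embedding dimension: number of minimal generators. -/
noncomputable def edim (S : Set ℕ) : ℕ := (primitives S).ncard

/-- The left elements: elements of `S` strictly below the nsConductor. -/
def lefts (S : Set ℕ) : Set ℕ := {s ∈ S | s < nsConductor S}

/-- The additive submonoid of ℕ generated by a set, viewed as a set. -/
def genBy (X : Set ℕ) : Set ℕ := (AddSubmonoid.closure X : Set ℕ)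

/-- `T` is a child of `S`: obtained by removing one big primitive. -/
def ChildOf (S T : Set ℕ) : Prop :=
  ∃ p : ℕ, IsPrimitive S p ∧ nsConductor S ≤ p ∧ T = S \ {p}

/-- `T` is a descendant of `S` (possibly `T = S`): obtained by finitely many
removals of big primitives. -/
def DescendantOf (S T : Set ℕ) : Prop :=
  Relation.ReflTransGen (fun A B => ChildOf A B) S T

/-- The gcd of the set `X` equals `1`: the only common divisor of all elements is `1`. -/
def SetGcdOne (X : Set ℕ) : Prop :=
  ∀ d : ℕ, (∀ x ∈ X, d ∣ x) → d = 1



section Aux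
variable {m i : ℕ} {I : Set ℕ}

lemma genBy_ge (hI : I = {x : ℕ | m + i + 1 ≤ x ∧ x ≤ 2 * m + i ∧ ¬ m ∣ x}) :
    ∀ s ∈ genBy ({m} ∪ I), s = 0 ∨ m ≤ s := by
  intro s hs
  induction hs using AddSubmonoid.closure_induction with
  | mem x hx =>
    rcases hx with hx | hx
    · right; exact le_of_eq hx.symm
    · right; simp only [hI, Set.mem_setOf_eq] at hx; omega
  | zero => left; rfl
  | add x y hx hy ihx ihy => omega

/-- structural lemma 1 -/
lemma genBy_struct1 (hI : I = {x : ℕ | m + i + 1 ≤ x ∧ x ≤ 2 * m + i ∧ ¬ m ∣ x}) :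
    ∀ s ∈ genBy ({m} ∪ I), m ∣ s ∨ (∃ y ∈ I, ∃ c, s = c * m + y) ∨ 2 * (m + i + 1) ≤ s := by
  intro s hs
  induction hs using AddSubmonoid.closure_induction with
  | mem x hx =>
    rcases hx with hx | hx
    · left; exact hx ▸ dvd_refl m
    · right; left; exact ⟨x, hx, 0, by ring⟩
  | zero => left; exact dvd_zero m
  | add x y hx hy ihx ihy =>
    rcases ihx with h1 | ⟨y1, hy1, c1, rfl⟩ | h1
    · rcases ihy with h2 | ⟨y2, hy2, c2, rfl⟩ | h2
      · left; exact dvd_add h1 h2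
      · right; left
        obtain ⟨k, rfl⟩ := h1
        exact ⟨y2, hy2, k + c2, by ring⟩
      · right; right; omega
    · rcases ihy with h2 | ⟨y2, hy2, c2, rfl⟩ | h2
      · right; left
        obtain ⟨k, rfl⟩ := h2
        exact ⟨y1, hy1, c1 + k, by ring⟩
      · right; right
        simp only [hI, Set.mem_setOf_eq] at hy1 hy2
        omega
      · right; right; omega
    · right; right; omega

/-- structural lemma 2 : decomposition -/
lemma genBy_struct2 :
    ∀ s ∈ genBy ({m} ∪ I), m ∣ s ∨ ∃ y ∈ I, y ≤ s ∧ s - y ∈ genBy ({m} ∪ I) := by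
  intro s hs
  induction hs using AddSubmonoid.closure_induction with
  | mem x hx =>
    rcases hx with hx | hx
    · left; exact hx ▸ dvd_refl m
    · right; exact ⟨x, hx, le_refl x, by simpa [genBy] using AddSubmonoid.zero_mem _⟩
  | zero => left; exact dvd_zero m
  | add x y hx hy ihx ihy =>
    rcases ihy with h2 | ⟨y2, hy2, hle, hmem⟩
    · rcases ihx with h1 | ⟨y1, hy1, hle, hmem⟩
      · left; exact dvd_add h1 h2
      · right; refine ⟨y1, hy1, by omega, ?_⟩
        have : x + y - y1 = (x - y1) + y := by omega
        rw [this]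
        exact AddSubmonoid.add_mem _ hmem hy
    · right; refine ⟨y2, hy2, by omega, ?_⟩
      have : x + y - y2 = x + (y - y2) := by omega
      rw [this]
      exact AddSubmonoid.add_mem _ hx hmem

end Aux

theorem stmt19 (m i : ℕ) (hm : 2 ≤ m) (I : Set ℕ)
    (hI : I = {x : ℕ | m + i + 1 ≤ x ∧ x ≤ 2 * m + i ∧ ¬ m ∣ x})
    (S : Set ℕ) (hS : S = genBy ({m} ∪ I)) :
    edim S = m ∧ ∀ x ∈ ({m} : Set ℕ) ∪ I, IsPrimitive S x := by
  subst hS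
  have hge := genBy_ge (m := m) (i := i) hI
  have hmS : m ∈ genBy ({m} ∪ I) := AddSubmonoid.subset_closure (Or.inl rfl)
  have hprim : ∀ x ∈ ({m} : Set ℕ) ∪ I, IsPrimitive (genBy ({m} ∪ I)) x := by
    intro x hx
    rcases hx with hx | hx
    · rcases hx with rfl
      refine ⟨hmS, by omega, ?_⟩
      intro a ha b hb ha0 hb0 hab
      have h1 := hge a ha; have h2 := hge b hb; omega
    · have hxI := hx
      simp only [hI, Set.mem_setOf_eq] at hxI
      refine ⟨AddSubmonoid.subset_closure (Or.inr hx), by omega, ?_⟩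
      intro a ha b hb ha0 hb0 hab
      have hga := hge a ha; have hgb := hge b hb
      rcases genBy_struct1 hI a ha with h1 | ⟨y1, hy1, c1, rfl⟩ | h1
      · rcases genBy_struct1 hI b hb with h2 | ⟨y2, hy2, c2, rfl⟩ | h2
        · exact hxI.2.2 (hab ▸ dvd_add h1 h2)
        · simp only [hI, Set.mem_setOf_eq] at hy2; omega
        · omega
      · simp only [hI, Set.mem_setOf_eq] at hy1; omega
      · omega
  refine ⟨?_, hprim⟩
  -- primitives = {m} ∪ I
  have hset : primitives (genBy ({m} ∪ I)) = ({m} : Set ℕ) ∪ I := by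
    ext p
    constructor
    · rintro ⟨hp, hp0, hmin⟩
      by_contra hpn
      simp only [Set.mem_union, Set.mem_singleton_iff, not_or] at hpn
      rcases genBy_struct2 p hp with hdvd | ⟨y, hy, hle, hmem⟩
      · obtain ⟨c, rfl⟩ := hdvd
        have hc : c ≠ 0 := by rintro rfl; simp at hp0
        have hc1 : c ≠ 1 := by rintro rfl; exact hpn.1 (by ring)
        obtain ⟨k, rfl⟩ : ∃ k, c = k + 2 := ⟨c - 2, by omega⟩
        have hb : m * (k + 1) ∈ genBy ({m} ∪ I) := by
          have := AddSubmonoid.nsmul_mem (S := AddSubmonoid.closure ({m} ∪ I)) hmS (k + 1)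
          simpa [genBy, nsmul_eq_mul, mul_comm] using this
        exact hmin m hmS (m * (k + 1)) hb (by omega) (by positivity) (by ring)
      · have hyI := hy
        simp only [hI, Set.mem_setOf_eq] at hyI
        rcases Nat.eq_or_lt_of_le hle with heq | hlt
        · exact hpn.2 (heq ▸ hy)
        · exact hmin y (AddSubmonoid.subset_closure (Or.inr hy)) (p - y) hmem
            (by omega) (by omega) (by omega)
    · exact hprim p
  -- cardinality
  set M := m * ((m + i) / m + 1) with hM
  have hdm : m * ((m + i) / m) + (m + i) % m = m + i := Nat.div_add_mod (m + i) m
  have hrm : (m + i) % m < m := Nat.mod_lt _ (by omega)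
  have hMlb : m + i < M := by
    have : M = m * ((m + i) / m) + m := by rw [hM]; ring
    omega
  have hMub : M ≤ 2 * m + i := by
    have : M = m * ((m + i) / m) + m := by rw [hM]; ring
    omega
  have hIeq : I = Set.Ioc (m + i) (2 * m + i) \ {M} := by
    ext x
    simp only [hI, Set.mem_setOf_eq, Set.mem_diff, Set.mem_Ioc, Set.mem_singleton_iff]
    constructor
    · rintro ⟨h1, h2, h3⟩
      refine ⟨⟨by omega, h2⟩, fun hx => h3 (hx ▸ ⟨(m + i) / m + 1, rfl⟩)⟩
    · rintro ⟨⟨h1, h2⟩, h3⟩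
      refine ⟨by omega, h2, fun hdvd => h3 ?_⟩
      obtain ⟨k, rfl⟩ := hdvd
      set q := (m + i) / m with hq
      have hk1 : q < k := by
        by_contra hcon
        push_neg at hcon
        have := Nat.mul_le_mul_left m hcon
        omega
      have hk2 : k < q + 2 := by
        by_contra hcon
        push_neg at hcon
        have := Nat.mul_le_mul_left m hcon
        have h4 : m * (q + 2) = m * q + 2 * m := by ring
        omega
      have : k = q + 1 := by omega
      rw [this, hM]
  have hfinI : I.Finite := by
    rw [hIeq]; exact (Set.finite_Ioc _ _).diff
  have hmnI : m ∉ I := by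
    simp only [hI, Set.mem_setOf_eq]; omega
  have hcardIoc : (Set.Ioc (m + i) (2 * m + i)).ncard = m := by
    rw [← Finset.coe_Ioc, Set.ncard_coe_finset, Nat.card_Ioc]
    omega
  have hcardI : I.ncard = m - 1 := by
    rw [hIeq, Set.ncard_diff_singleton_of_mem (show M ∈ Set.Ioc (m + i) (2 * m + i) by simp [Set.mem_Ioc]; omega)
      , hcardIoc]
  rw [edim, hset, Set.ncard_union_eq (by simp [Set.disjoint_singleton_left, hmnI])
    (Set.finite_singleton m) hfinI, Set.ncard_singleton, hcardI]
  omega
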